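/- Let M > 0 and k ∈ (−1,1). For R̃ > 0 let the almost-sphere AS(R̃) be the set of points (u,v) with u = (√2M/(1+k))^{1/4}·√R̃·cos ψ and v = (√2M/(1−k))^{1/4}·√R̃·sin ψ for some ψ ∈ [0,π/2]. There exist constants C̲₁, C̲₂, C̄₁, C̄₂ depending only on M and k, and for every δ > 0 a threshold T₀, such that for every R̃ ≥ T₀, every (u,v) ∈ AS(R̃), and every η ∈ [0,π/2] satisfying the unparametrized geodesic relation for (u,v), the number R = S_η(u,v) satisfies R + C̲₁·log R + C̲₂ ≤ R̃ ≤ (1+δ)·R + C̄₁·log R + C̄₂. -/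

import Mathlib

open Real

/-- The separated distance function `S_η` of the generalized Taub-NUT polytope metric,
in adapted quadratic coordinates; it equals the Riemannian distance from the origin to
`(u,v)` when `(u,v)` lies on the geodesic of initial angle `η`. -/
noncomputable def Sdist (M k η : ℝ) (u v : ℝ) : ℝ :=
  let U := Real.sqrt (1 + k) * u / Real.cos η
  let V := Real.sqrt (1 - k) * v / Real.sin η
  Real.sqrt (2 * Real.sqrt 2 / M) *
    ((Real.cos η ^ 2 / (2 * Real.sqrt (1 + k))) *
        (U * Real.sqrt (1 + U ^ 2) + Real.log (U + Real.sqrt (1 + U ^ 2))) +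
     (Real.sin η ^ 2 / (2 * Real.sqrt (1 - k))) *
        (V * Real.sqrt (1 + V ^ 2) + Real.log (V + Real.sqrt (1 + V ^ 2))))

open Classical in
/-- The unparametrized geodesic relation: `(u,v)` lies on the geodesic from the origin
with initial angle `η` (interpreted as `v = 0` when `η = 0` and `u = 0` when `η = π/2`). -/
noncomputable def GeodRel (k η u v : ℝ) : Prop :=
  if η = 0 then v = 0
  else if η = Real.pi / 2 then u = 0
  else
    let U := Real.sqrt (1 + k) * u / Real.cos η
    let V := Real.sqrt (1 - k) * v / Real.sin η
    (U + Real.sqrt (1 + U ^ 2)) ^ (1 / Real.sqrt (1 + k))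
      = (V + Real.sqrt (1 + V ^ 2)) ^ (1 / Real.sqrt (1 - k))


lemma block_eq (x : ℝ) : x * Real.sqrt (1+x^2) + Real.log (x + Real.sqrt (1+x^2))
    = Real.sinh (Real.arsinh x) * Real.cosh (Real.arsinh x) + Real.arsinh x := by
  rw [Real.sinh_arsinh, Real.cosh_arsinh]
  rfl

lemma coef_eq (M : ℝ) (hM : 0 < M) :
    Real.sqrt (2*Real.sqrt 2/M) = Real.sqrt (Real.sqrt 2*M)*Real.sqrt 2/M := by
  have hc2 : (Real.sqrt (Real.sqrt 2*M))^2 = Real.sqrt 2*M := Real.sq_sqrt (by positivity)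
  have h22 : (Real.sqrt 2:ℝ)^2 = 2 := Real.sq_sqrt (by norm_num)
  have hA : 2*Real.sqrt 2/M = (Real.sqrt (Real.sqrt 2*M)*Real.sqrt 2/M)^2 := by
    have hr : (Real.sqrt (Real.sqrt 2*M)*Real.sqrt 2/M)^2
        = (Real.sqrt (Real.sqrt 2*M))^2 * (Real.sqrt 2)^2/M^2 := by ring
    rw [hr, hc2, h22]
    field_simp
  rw [hA, Real.sqrt_sq (by positivity)]

lemma quarter_sq (X : ℝ) (hX : 0 ≤ X) : (X ^ ((1:ℝ)/4))^2 = Real.sqrt X := by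
  rw [← Real.rpow_natCast (X ^ ((1:ℝ)/4)) 2, ← Real.rpow_mul hX, Real.sqrt_eq_rpow]
  norm_num


lemma shch_lb {x : ℝ} (hx : 0 ≤ x) : sinh x ^ 2 ≤ sinh x * cosh x := by
  nlinarith [Real.sinh_nonneg_iff.mpr hx, Real.cosh_pos x, Real.sinh_lt_cosh x]

lemma shch_ub (x : ℝ) : sinh x * cosh x ≤ sinh x ^ 2 + 1/2 := by
  have hpq : Real.exp x * Real.exp (-x) = 1 := by rw [← Real.exp_add]; simp
  have hq0 : 0 < Real.exp (-x) := Real.exp_pos _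
  rw [Real.sinh_eq, Real.cosh_eq]
  nlinarith

lemma arsinh_le {x : ℝ} (hx : 0 ≤ x) : arsinh x ≤ Real.log (1 + 2*x) := by
  have h1 : Real.sqrt (1 + x^2) ≤ 1 + x := by
    rw [show (1:ℝ) + x = Real.sqrt ((1+x)^2) from (Real.sqrt_sq (by linarith)).symm]
    exact Real.sqrt_le_sqrt (by nlinarith)
  have h2 : 0 < x + Real.sqrt (1 + x^2) := by positivity
  calc arsinh x = Real.log (x + Real.sqrt (1 + x^2)) := rfl
    _ ≤ Real.log (1 + 2*x) := Real.log_le_log h2 (by linarith)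

noncomputable def Kc (M k : ℝ) : ℝ := Real.sqrt (Real.sqrt 2 * M) * Real.sqrt 2 / (2*M)
noncomputable def Ac (k : ℝ) : ℝ := 1/Real.sqrt (1+k) + 1/Real.sqrt (1-k)
noncomputable def Bc (M k : ℝ) : ℝ :=
  Real.log (1 + 2*Real.sqrt (2*(Real.sqrt (1+k))*Real.sqrt (Real.sqrt 2*M)))/Real.sqrt (1+k)
  + Real.log (1 + 2*Real.sqrt (2*(Real.sqrt (1-k))*Real.sqrt (Real.sqrt 2*M)))/Real.sqrt (1-k)
noncomputable def Dc (M k : ℝ) : ℝ :=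
  Real.sqrt (Real.sqrt 2*M)*Real.sqrt 2/M * (1/(4*Real.sqrt (1+k)) + 1/(4*Real.sqrt (1-k)))

lemma tbound (c d Rt x : ℝ) (hc : 0 < c) (hd : 0 < d) (hRt : 1 ≤ Rt) (hx : 0 ≤ x)
    (hsh : Real.sinh x ^ 2 ≤ 2*d*c*Rt) :
    x ≤ Real.log (1 + 2*Real.sqrt (2*d*c)) + Real.log Rt := by
  have hsx : Real.sinh x ≤ Real.sqrt (2*d*c*Rt) := Real.le_sqrt_of_sq_le hsh
  have h1' : x = Real.arsinh (Real.sinh x) := (Real.arsinh_sinh x).symm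
  have hsqrtRt : Real.sqrt Rt ≤ Rt :=
    calc Real.sqrt Rt ≤ Real.sqrt (Rt^2) := Real.sqrt_le_sqrt (by nlinarith)
      _ = Rt := Real.sqrt_sq (by linarith)
  have hsplit : Real.sqrt (2*d*c*Rt) = Real.sqrt (2*d*c) * Real.sqrt Rt := by
    rw [← Real.sqrt_mul (by positivity)]
  have hsd : 0 ≤ Real.sqrt (2*d*c) := Real.sqrt_nonneg _
  calc x = Real.arsinh (Real.sinh x) := h1'
    _ ≤ Real.arsinh (Real.sqrt (2*d*c*Rt)) := Real.arsinh_le_arsinh.mpr hsx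
    _ ≤ Real.log (1 + 2*Real.sqrt (2*d*c*Rt)) := arsinh_le (Real.sqrt_nonneg _)
    _ ≤ Real.log ((1 + 2*Real.sqrt (2*d*c)) * Rt) := by
        apply Real.log_le_log (by positivity)
        rw [hsplit]
        nlinarith
    _ = Real.log (1 + 2*Real.sqrt (2*d*c)) + Real.log Rt := by
        rw [Real.log_mul (by positivity) (by linarith)]

set_option maxHeartbeats 1000000 in
lemma core (M k : ℝ) (hM : 0 < M) (hk1 : (-1:ℝ) < k) (hk2 : k < 1)
    (Rt t α β cη sη cψ sψ S : ℝ)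
    (hRt : 2 ≤ Rt) (ht : 0 ≤ t) (hα : 0 ≤ α) (hβ : 0 ≤ β)
    (hη : cη^2 + sη^2 = 1) (hψ : cψ^2 + sψ^2 = 1)
    (h1 : cη^2 * Real.sinh α ^ 2 = Real.sqrt (1+k) * Real.sqrt (Real.sqrt 2 * M) * Rt * cψ^2)
    (h2 : sη^2 * Real.sinh β ^ 2 = Real.sqrt (1-k) * Real.sqrt (Real.sqrt 2 * M) * Rt * sψ^2)
    (h3 : cη^2 * α = cη^2 * (Real.sqrt (1+k) * t))
    (h4 : sη^2 * β = sη^2 * (Real.sqrt (1-k) * t))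
    (hS : S = Real.sqrt (Real.sqrt 2 * M) * Real.sqrt 2 / M *
      (cη^2 * (Real.sinh α * Real.cosh α + α) / (2 * Real.sqrt (1+k)) +
       sη^2 * (Real.sinh β * Real.cosh β + β) / (2 * Real.sqrt (1-k)))) :
    Rt ≤ S ∧ S + (-(Kc M k * Ac k)) * Real.log S + (-(Kc M k * Bc M k + Dc M k)) ≤ Rt := by
  have ha : 0 < Real.sqrt (1+k) := Real.sqrt_pos.mpr (by linarith)
  have hb : 0 < Real.sqrt (1-k) := Real.sqrt_pos.mpr (by linarith)
  have hc : 0 < Real.sqrt (Real.sqrt 2 * M) := Real.sqrt_pos.mpr (by positivity)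
  have hc2 : Real.sqrt (Real.sqrt 2 * M) ^ 2 = Real.sqrt 2 * M := Real.sq_sqrt (by positivity)
  have h22 : Real.sqrt 2 ^ 2 = 2 := Real.sq_sqrt (by norm_num)
  set a := Real.sqrt (1+k) with hadef
  set b := Real.sqrt (1-k) with hbdef
  set c := Real.sqrt (Real.sqrt 2 * M) with hcdef
  clear_value a b c
  have hMne : M ≠ 0 := ne_of_gt hM
  have hcη : 0 ≤ cη^2 := sq_nonneg _
  have hsη : 0 ≤ sη^2 := sq_nonneg _
  have hcη1 : cη^2 ≤ 1 := by linarith [sq_nonneg sη]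
  have hsη1 : sη^2 ≤ 1 := by linarith [sq_nonneg cη]
  have he1n : 0 ≤ Real.sinh α * Real.cosh α - Real.sinh α ^ 2 := by
    have := shch_lb hα; linarith
  have he1u : Real.sinh α * Real.cosh α - Real.sinh α ^ 2 ≤ 1/2 := by
    have := shch_ub α; linarith
  have he2n : 0 ≤ Real.sinh β * Real.cosh β - Real.sinh β ^ 2 := by
    have := shch_lb hβ; linarith
  have he2u : Real.sinh β * Real.cosh β - Real.sinh β ^ 2 ≤ 1/2 := by
    have := shch_ub β; linarith
  have hcc : c * Real.sqrt 2 / M * c = 2 := by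
    field_simp
    linear_combination Real.sqrt 2 * hc2 + M * h22
  have hX1 : cη^2 * (Real.sinh α * Real.cosh α + α) / (2*a)
      = c*Rt*cψ^2/2 + cη^2*t/2 + cη^2*(Real.sinh α * Real.cosh α - Real.sinh α ^ 2)/(2*a) := by
    calc cη^2 * (Real.sinh α * Real.cosh α + α) / (2*a)
        = (cη^2 * Real.sinh α ^2 + cη^2*α + cη^2*(Real.sinh α * Real.cosh α - Real.sinh α ^ 2))/(2*a) := by ring
      _ = (a*c*Rt*cψ^2 + cη^2*(a*t) + cη^2*(Real.sinh α * Real.cosh α - Real.sinh α ^ 2))/(2*a) := by rw [h1, h3]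
      _ = _ := by field_simp
  have hX2 : sη^2 * (Real.sinh β * Real.cosh β + β) / (2*b)
      = c*Rt*sψ^2/2 + sη^2*t/2 + sη^2*(Real.sinh β * Real.cosh β - Real.sinh β ^ 2)/(2*b) := by
    calc sη^2 * (Real.sinh β * Real.cosh β + β) / (2*b)
        = (sη^2 * Real.sinh β ^2 + sη^2*β + sη^2*(Real.sinh β * Real.cosh β - Real.sinh β ^ 2))/(2*b) := by ring
      _ = (b*c*Rt*sψ^2 + sη^2*(b*t) + sη^2*(Real.sinh β * Real.cosh β - Real.sinh β ^ 2))/(2*b) := by rw [h2, h4]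
      _ = _ := by field_simp
  have key : S = Rt + Kc M k * t + (c * Real.sqrt 2 / M) *
      (cη^2*(Real.sinh α * Real.cosh α - Real.sinh α ^ 2)/(2*a)
        + sη^2*(Real.sinh β * Real.cosh β - Real.sinh β ^ 2)/(2*b)) := by
    rw [hS, hX1, hX2]
    simp only [Kc, ← hcdef]
    linear_combination (c * Real.sqrt 2 / M * c * Rt / 2) * hψ
      + (c * Real.sqrt 2 / M * t / 2) * hη + (Rt/2) * hcc
  have hK : 0 < Kc M k := by rw [Kc]; positivity
  have hE1 : cη^2*(Real.sinh α * Real.cosh α - Real.sinh α ^ 2)/(2*a) ≤ 1/(4*a) := by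
    have hnum : cη^2*(Real.sinh α * Real.cosh α - Real.sinh α ^ 2) ≤ 1/2 := by
      calc cη^2*(Real.sinh α * Real.cosh α - Real.sinh α ^ 2)
          ≤ 1*(Real.sinh α * Real.cosh α - Real.sinh α ^ 2) :=
            mul_le_mul_of_nonneg_right hcη1 he1n
        _ ≤ 1/2 := by linarith
    calc cη^2*(Real.sinh α * Real.cosh α - Real.sinh α ^ 2)/(2*a) ≤ (1/2)/(2*a) :=
          div_le_div_of_nonneg_right hnum (by positivity)
      _ = 1/(4*a) := by ring
  have hE2 : sη^2*(Real.sinh β * Real.cosh β - Real.sinh β ^ 2)/(2*b) ≤ 1/(4*b) := by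
    have hnum : sη^2*(Real.sinh β * Real.cosh β - Real.sinh β ^ 2) ≤ 1/2 := by
      calc sη^2*(Real.sinh β * Real.cosh β - Real.sinh β ^ 2)
          ≤ 1*(Real.sinh β * Real.cosh β - Real.sinh β ^ 2) :=
            mul_le_mul_of_nonneg_right hsη1 he2n
        _ ≤ 1/2 := by linarith
    calc sη^2*(Real.sinh β * Real.cosh β - Real.sinh β ^ 2)/(2*b) ≤ (1/2)/(2*b) :=
          div_le_div_of_nonneg_right hnum (by positivity)
      _ = 1/(4*b) := by ring
  have hE1n : 0 ≤ cη^2*(Real.sinh α * Real.cosh α - Real.sinh α ^ 2)/(2*a) := by positivity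
  have hE2n : 0 ≤ sη^2*(Real.sinh β * Real.cosh β - Real.sinh β ^ 2)/(2*b) := by positivity
  have hq : (0:ℝ) < c * Real.sqrt 2 / M := by positivity
  have hRtS : Rt ≤ S := by
    rw [key]
    have := mul_nonneg hK.le ht
    have := mul_nonneg hq.le (add_nonneg hE1n hE2n)
    linarith
  refine ⟨hRtS, ?_⟩
  -- bound on t
  have hlogRt : 0 ≤ Real.log Rt := Real.log_nonneg (by linarith)
  have hGa : 0 ≤ Real.log (1 + 2*Real.sqrt (2*a*c)) := Real.log_nonneg (by linarith [Real.sqrt_nonneg (2*a*c)])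
  have hGb : 0 ≤ Real.log (1 + 2*Real.sqrt (2*b*c)) := Real.log_nonneg (by linarith [Real.sqrt_nonneg (2*b*c)])
  have hT : t ≤ Ac k * Real.log Rt + Bc M k := by
    rcases le_or_gt (1/2 : ℝ) (cη^2) with hcase | hcase
    · have hne : cη^2 ≠ 0 := by intro h0; rw [h0] at hcase; norm_num at hcase
      have hαt : α = a * t := mul_left_cancel₀ hne h3
      have hsh : Real.sinh α ^ 2 ≤ 2*a*c*Rt := by
        have hint1 : 0 ≤ (2*cη^2 - 1) * Real.sinh α ^ 2 :=
          mul_nonneg (by linarith) (sq_nonneg _)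
        have hint2 : 0 ≤ a*c*Rt*sψ^2 := by positivity
        have hsum : a*c*Rt*cψ^2 + a*c*Rt*sψ^2 = a*c*Rt := by
          linear_combination (a*c*Rt)*hψ
        linarith [h1]
      have := tbound c a Rt α hc ha (by linarith) hα hsh
      have ht2 : t ≤ (Real.log (1 + 2*Real.sqrt (2*a*c)) + Real.log Rt)/a := by
        rw [le_div_iff₀ ha, mul_comm]
        rw [hαt] at this; linarith
      have hAa : (Real.log (1 + 2*Real.sqrt (2*a*c)) + Real.log Rt)/a
          ≤ Ac k * Real.log Rt + Bc M k := by
        rw [Ac, Bc, ← hadef, ← hbdef, ← hcdef]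
        have p1 : 0 ≤ Real.log Rt / b := div_nonneg hlogRt hb.le
        have p2 : 0 ≤ Real.log (1 + 2*Real.sqrt (2*b*c))/b := div_nonneg hGb hb.le
        have expand : (1/a + 1/b) * Real.log Rt = Real.log Rt/a + Real.log Rt/b := by
          ring
        have r1 : (Real.log (1 + 2*Real.sqrt (2*a*c)) + Real.log Rt)/a
            = Real.log (1 + 2*Real.sqrt (2*a*c))/a + Real.log Rt/a := by ring
        linarith
      linarith
    · have hs2 : 1/2 ≤ sη^2 := by linarith
      have hne : sη^2 ≠ 0 := by intro h0; rw [h0] at hs2; norm_num at hs2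
      have hβt : β = b * t := mul_left_cancel₀ hne h4
      have hsh : Real.sinh β ^ 2 ≤ 2*b*c*Rt := by
        have hint1 : 0 ≤ (2*sη^2 - 1) * Real.sinh β ^ 2 :=
          mul_nonneg (by linarith) (sq_nonneg _)
        have hint2 : 0 ≤ b*c*Rt*cψ^2 := by positivity
        have hsum : b*c*Rt*cψ^2 + b*c*Rt*sψ^2 = b*c*Rt := by
          linear_combination (b*c*Rt)*hψ
        linarith [h2]
      have := tbound c b Rt β hc hb (by linarith) hβ hsh
      have ht2 : t ≤ (Real.log (1 + 2*Real.sqrt (2*b*c)) + Real.log Rt)/b := by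
        rw [le_div_iff₀ hb, mul_comm]
        rw [hβt] at this; linarith
      have hAa : (Real.log (1 + 2*Real.sqrt (2*b*c)) + Real.log Rt)/b
          ≤ Ac k * Real.log Rt + Bc M k := by
        rw [Ac, Bc, ← hadef, ← hbdef, ← hcdef]
        have p1 : 0 ≤ Real.log Rt / a := div_nonneg hlogRt ha.le
        have p2 : 0 ≤ Real.log (1 + 2*Real.sqrt (2*a*c))/a := div_nonneg hGa ha.le
        have expand : (1/a + 1/b) * Real.log Rt = Real.log Rt/a + Real.log Rt/b := by
          ring
        have r1 : (Real.log (1 + 2*Real.sqrt (2*b*c)) + Real.log Rt)/b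
            = Real.log (1 + 2*Real.sqrt (2*b*c))/b + Real.log Rt/b := by ring
        linarith
      linarith
  -- conclude
  have hlogle : Real.log Rt ≤ Real.log S := Real.log_le_log (by linarith) hRtS
  have hDc : (c * Real.sqrt 2 / M) *
      (cη^2*(Real.sinh α * Real.cosh α - Real.sinh α ^ 2)/(2*a)
        + sη^2*(Real.sinh β * Real.cosh β - Real.sinh β ^ 2)/(2*b)) ≤ Dc M k := by
    rw [Dc, ← hadef, ← hbdef, ← hcdef]
    apply mul_le_mul_of_nonneg_left _ hq.le
    linarith
  have hAc : 0 < Ac k := by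
    rw [Ac, ← hadef, ← hbdef]
    exact add_pos (div_pos one_pos ha) (div_pos one_pos hb)
  have hKt : Kc M k * t ≤ Kc M k * (Ac k * Real.log Rt + Bc M k) :=
    mul_le_mul_of_nonneg_left hT hK.le
  have hKlog : Kc M k * (Ac k * Real.log Rt) ≤ Kc M k * (Ac k * Real.log S) := by
    apply mul_le_mul_of_nonneg_left _ hK.le
    exact mul_le_mul_of_nonneg_left hlogle hAc.le
  have hdist : Kc M k * (Ac k * Real.log Rt + Bc M k)
      = Kc M k * (Ac k * Real.log Rt) + Kc M k * Bc M k := by ring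
  have hgd : Kc M k * (Ac k * Real.log S) = (Kc M k * Ac k) * Real.log S := by ring
  linarith [key, hKt, hKlog, hDc, hdist, hgd]

/-- Almost-spheres: points of the locus `AS(R̃)` lie at Riemannian distance `R` from the
origin with `R + C̲₁ log R + C̲₂ ≤ R̃ ≤ (1+δ) R + C̄₁ log R + C̄₂`. -/
theorem stmt_7 (M k : ℝ) (hM : 0 < M) (hk : k ∈ Set.Ioo (-1 : ℝ) 1) :
    ∃ C₁ C₂ C₃ C₄ : ℝ, ∀ δ : ℝ, 0 < δ → ∃ T₀ : ℝ, ∀ Rt : ℝ, T₀ ≤ Rt →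
      ∀ ψ ∈ Set.Icc (0 : ℝ) (Real.pi / 2), ∀ η ∈ Set.Icc (0 : ℝ) (Real.pi / 2),
        let u := (Real.sqrt 2 * M / (1 + k)) ^ ((1 : ℝ) / 4) * Real.sqrt Rt * Real.cos ψ
        let v := (Real.sqrt 2 * M / (1 - k)) ^ ((1 : ℝ) / 4) * Real.sqrt Rt * Real.sin ψ
        let R := Sdist M k η u v
        GeodRel k η u v →
          R + C₁ * Real.log R + C₂ ≤ Rt ∧ Rt ≤ (1 + δ) * R + C₃ * Real.log R + C₄ := by
  obtain ⟨hk1, hk2⟩ := hk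
  refine ⟨-(Kc M k * Ac k), -(Kc M k * Bc M k + Dc M k), 0, 0, ?_⟩
  intro δ hδ
  refine ⟨2, ?_⟩
  intro Rt hRt ψ hψm η hηm
  intro u v R hrel
  obtain ⟨hψ0, hψ1⟩ := hψm
  obtain ⟨hη0, hη1⟩ := hηm
  have hpi := Real.pi_pos
  have ha : 0 < Real.sqrt (1+k) := Real.sqrt_pos.mpr (by linarith)
  have hb : 0 < Real.sqrt (1-k) := Real.sqrt_pos.mpr (by linarith)
  have hc : 0 < Real.sqrt (Real.sqrt 2 * M) := Real.sqrt_pos.mpr (by positivity)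
  have hcosψ : 0 ≤ Real.cos ψ := Real.cos_nonneg_of_mem_Icc ⟨by linarith, hψ1⟩
  have hsinψ : 0 ≤ Real.sin ψ := Real.sin_nonneg_of_nonneg_of_le_pi hψ0 (by linarith)
  have hcosη : 0 ≤ Real.cos η := Real.cos_nonneg_of_mem_Icc ⟨by linarith, hη1⟩
  have hsinη : 0 ≤ Real.sin η := Real.sin_nonneg_of_nonneg_of_le_pi hη0 (by linarith)
  have hXp : (0:ℝ) < Real.sqrt 2 * M / (1+k) := div_pos (by positivity) (by linarith)
  have hXq : (0:ℝ) < Real.sqrt 2 * M / (1-k) := div_pos (by positivity) (by linarith)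
  have hp : 0 < (Real.sqrt 2 * M / (1+k)) ^ ((1:ℝ)/4) := Real.rpow_pos_of_pos hXp _
  have hq : 0 < (Real.sqrt 2 * M / (1-k)) ^ ((1:ℝ)/4) := Real.rpow_pos_of_pos hXq _
  have hudef : u = (Real.sqrt 2 * M / (1 + k)) ^ ((1:ℝ)/4) * Real.sqrt Rt * Real.cos ψ := rfl
  have hvdef : v = (Real.sqrt 2 * M / (1 - k)) ^ ((1:ℝ)/4) * Real.sqrt Rt * Real.sin ψ := rfl
  have hRdef : R = Sdist M k η u v := rfl
  have hu : 0 ≤ u := by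
    rw [hudef]; exact mul_nonneg (mul_nonneg hp.le (Real.sqrt_nonneg _)) hcosψ
  have hv : 0 ≤ v := by
    rw [hvdef]; exact mul_nonneg (mul_nonneg hq.le (Real.sqrt_nonneg _)) hsinψ
  have hRt0 : (0:ℝ) < Rt := by linarith
  have hsqRt : Real.sqrt Rt ^ 2 = Rt := Real.sq_sqrt hRt0.le
  have hsqrtRtpos : 0 < Real.sqrt Rt := Real.sqrt_pos.mpr hRt0
  have hp4 : ((Real.sqrt 2 * M / (1+k)) ^ ((1:ℝ)/4))^2
      = Real.sqrt (Real.sqrt 2 * M) / Real.sqrt (1+k) := by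
    rw [quarter_sq _ hXp.le, Real.sqrt_div (by positivity)]
  have hq4 : ((Real.sqrt 2 * M / (1-k)) ^ ((1:ℝ)/4))^2
      = Real.sqrt (Real.sqrt 2 * M) / Real.sqrt (1-k) := by
    rw [quarter_sq _ hXq.le, Real.sqrt_div (by positivity)]
  have hu2 : Real.sqrt (1+k)^2 * u^2
      = Real.sqrt (1+k) * Real.sqrt (Real.sqrt 2 * M) * Rt * Real.cos ψ^2 := by
    have e : u^2 = ((Real.sqrt 2 * M / (1+k)) ^ ((1:ℝ)/4))^2 * Real.sqrt Rt ^2 * Real.cos ψ^2 := by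
      rw [hudef]; ring
    rw [e, hp4, hsqRt]
    field_simp
  have hv2 : Real.sqrt (1-k)^2 * v^2
      = Real.sqrt (1-k) * Real.sqrt (Real.sqrt 2 * M) * Rt * Real.sin ψ^2 := by
    have e : v^2 = ((Real.sqrt 2 * M / (1-k)) ^ ((1:ℝ)/4))^2 * Real.sqrt Rt ^2 * Real.sin ψ^2 := by
      rw [hvdef]; ring
    rw [e, hq4, hsqRt]
    field_simp
  set α := Real.arsinh (Real.sqrt (1+k) * u / Real.cos η) with hαdef
  set β := Real.arsinh (Real.sqrt (1-k) * v / Real.sin η) with hβdef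
  have hα : 0 ≤ α := Real.arsinh_nonneg_iff.mpr (div_nonneg (mul_nonneg ha.le hu) hcosη)
  have hβ : 0 ≤ β := Real.arsinh_nonneg_iff.mpr (div_nonneg (mul_nonneg hb.le hv) hsinη)
  have hS : Sdist M k η u v = Real.sqrt (Real.sqrt 2 * M) * Real.sqrt 2 / M *
      (Real.cos η^2 * (Real.sinh α * Real.cosh α + α)/(2*Real.sqrt (1+k))
       + Real.sin η^2 * (Real.sinh β * Real.cosh β + β)/(2*Real.sqrt (1-k))) := by
    simp only [Sdist]
    rw [block_eq, block_eq, coef_eq M hM, hαdef, hβdef]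
    ring
  have main : ∃ t : ℝ, 0 ≤ t ∧
      (Real.cos η^2 * Real.sinh α ^ 2
        = Real.sqrt (1+k) * Real.sqrt (Real.sqrt 2 * M) * Rt * Real.cos ψ^2) ∧
      (Real.sin η^2 * Real.sinh β ^ 2
        = Real.sqrt (1-k) * Real.sqrt (Real.sqrt 2 * M) * Rt * Real.sin ψ^2) ∧
      (Real.cos η^2 * α = Real.cos η^2 * (Real.sqrt (1+k) * t)) ∧
      (Real.sin η^2 * β = Real.sin η^2 * (Real.sqrt (1-k) * t)) := by
    by_cases hη0' : η = 0
    · subst hη0'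
      have hv0 : v = 0 := by
        simpa only [GeodRel, if_pos rfl, ↓reduceIte] using hrel
      have hsψ : Real.sin ψ = 0 := by
        have h := hv0
        rw [hvdef] at h
        rcases mul_eq_zero.mp h with h' | h'
        · exact absurd h' (by positivity)
        · exact h'
      refine ⟨α / Real.sqrt (1+k), div_nonneg hα ha.le, ?_, ?_, ?_, ?_⟩
      · rw [hαdef, Real.sinh_arsinh, Real.cos_zero]
        have : ((1:ℝ))^2 * (Real.sqrt (1+k) * u / 1)^2 = Real.sqrt (1+k)^2*u^2 := by ring
        rw [this, hu2]
      · simp [hsψ]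
      · rw [mul_div_cancel₀ _ (ne_of_gt ha)]
      · simp
    · by_cases hηpi : η = Real.pi/2
      · subst hηpi
        have hu0 : u = 0 := by
          simpa only [GeodRel, if_neg hη0', if_pos rfl, ↓reduceIte] using hrel
        have hcψ : Real.cos ψ = 0 := by
          have h := hu0
          rw [hudef] at h
          rcases mul_eq_zero.mp h with h' | h'
          · exact absurd h' (by positivity)
          · exact h'
        refine ⟨β / Real.sqrt (1-k), div_nonneg hβ hb.le, ?_, ?_, ?_, ?_⟩
        · simp [Real.cos_pi_div_two, hcψ]
        · rw [hβdef, Real.sinh_arsinh, Real.sin_pi_div_two]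
          have : ((1:ℝ))^2 * (Real.sqrt (1-k) * v / 1)^2 = Real.sqrt (1-k)^2*v^2 := by ring
          rw [this, hv2]
        · simp [Real.cos_pi_div_two]
        · rw [mul_div_cancel₀ _ (ne_of_gt hb)]
      · have hηlt : η < Real.pi/2 := lt_of_le_of_ne hη1 hηpi
        have hηgt : 0 < η := lt_of_le_of_ne hη0 (Ne.symm hη0')
        have hcosηpos : 0 < Real.cos η :=
          Real.cos_pos_of_mem_Ioo ⟨by linarith, hηlt⟩
        have hsinηpos : 0 < Real.sin η := Real.sin_pos_of_pos_of_lt_pi hηgt (by linarith)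
        have hrel' : (Real.sqrt (1+k) * u / Real.cos η
              + Real.sqrt (1 + (Real.sqrt (1+k) * u / Real.cos η)^2)) ^ (1/Real.sqrt (1+k))
            = (Real.sqrt (1-k) * v / Real.sin η
              + Real.sqrt (1 + (Real.sqrt (1-k) * v / Real.sin η)^2)) ^ (1/Real.sqrt (1-k)) := by
          simpa only [GeodRel, if_neg hη0', if_neg hηpi] using hrel
        rw [← Real.exp_arsinh, ← Real.exp_arsinh, ← Real.exp_mul, ← Real.exp_mul] at hrel'
        have hab : α * (1/Real.sqrt (1+k)) = β * (1/Real.sqrt (1-k)) := by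
          rw [hαdef, hβdef]; exact Real.exp_eq_exp.mp hrel'
        refine ⟨α / Real.sqrt (1+k), div_nonneg hα ha.le, ?_, ?_, ?_, ?_⟩
        · rw [hαdef, Real.sinh_arsinh]
          have : Real.cos η^2 * (Real.sqrt (1+k) * u / Real.cos η)^2
              = Real.sqrt (1+k)^2*u^2 := by
            field_simp
          rw [this, hu2]
        · rw [hβdef, Real.sinh_arsinh]
          have : Real.sin η^2 * (Real.sqrt (1-k) * v / Real.sin η)^2
              = Real.sqrt (1-k)^2*v^2 := by
            field_simp
          rw [this, hv2]
        · rw [mul_div_cancel₀ _ (ne_of_gt ha)]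
        · have hβeq : β = Real.sqrt (1-k) * (α / Real.sqrt (1+k)) := by
            field_simp at hab ⊢
            linarith [hab]
          rw [← hβeq]
  obtain ⟨t, ht, h1, h2, h3, h4⟩ := main
  obtain ⟨hlow, hup⟩ := core M k hM hk1 hk2 Rt t α β (Real.cos η) (Real.sin η)
    (Real.cos ψ) (Real.sin ψ) R hRt ht hα hβ (Real.cos_sq_add_sin_sq η)
    (Real.cos_sq_add_sin_sq ψ) h1 h2 h3 h4 (by rw [hRdef, hS])
  refine ⟨hup, ?_⟩
  have hR0 : 0 ≤ R := by linarith
  have hd : 0 ≤ δ * R := mul_nonneg hδ.le hR0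
  have he : (1+δ)*R + 0*Real.log R + 0 = R + δ*R := by ring
  linarith
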